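/- Let x : ℝ → ℝⁿ be a differentiable curve with x(t) ≠ 0 for all t ≥ 0 that solves the preconditioned gradient flow x'(t) = −B⁻¹∇f(x(t)), where ∇f(x) = (2/(xᵀMx))(Ax − f(x)Mx), with x(0)ᵀB x(0) = 1 and f(x(0)) < λ₂. Then for all t ≥ 0, f(x(t)) − λ₁ ≤ e^{−Ct}·(f(x(0)) − λ₁), where C = 4λ₁(λ₂ − f(x(0)))/(κ_ν λ₂) and κ_ν = ν_max/ν_min. -/

import Mathlib

open Matrix

section Helpers

lemma posdef_dot {N : ℕ} {M : Matrix (Fin N) (Fin N) ℝ} (hM : M.PosDef)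
    {z : Fin N → ℝ} (hz : z ≠ 0) : 0 < z ⬝ᵥ M *ᵥ z := by
  have := hM.re_dotProduct_pos hz
  simpa using this

lemma posdef_dot_nonneg {N : ℕ} {M : Matrix (Fin N) (Fin N) ℝ} (hM : M.PosDef)
    (z : Fin N → ℝ) : 0 ≤ z ⬝ᵥ M *ᵥ z := by
  rcases eq_or_ne z 0 with h | h
  · simp [h]
  · exact (posdef_dot hM h).le

lemma dot_symm {N : ℕ} {S : Matrix (Fin N) (Fin N) ℝ} (hS : Sᵀ = S)
    (a b : Fin N → ℝ) : a ⬝ᵥ S *ᵥ b = b ⬝ᵥ S *ᵥ a := by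
  rw [Matrix.dotProduct_mulVec, dotProduct_comm]
  nth_rewrite 2 [← hS]
  rw [Matrix.mulVec_transpose]

lemma quad_deriv {N : ℕ} (S : Matrix (Fin N) (Fin N) ℝ) (hS : Sᵀ = S)
    {x : ℝ → Fin N → ℝ} {v : Fin N → ℝ} {t : ℝ} (hx : HasDerivAt x v t) :
    HasDerivAt (fun s => x s ⬝ᵥ S *ᵥ x s) (2 * (v ⬝ᵥ S *ᵥ x t)) t := by
  have hxi : ∀ i, HasDerivAt (fun s => x s i) (v i) t := fun i => hasDerivAt_pi.mp hx i
  have h : HasDerivAt (fun s => x s ⬝ᵥ S *ᵥ x s)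
      (∑ i, ∑ j, (v i * (S i j * x t j) + x t i * (S i j * v j))) t := by
    have : ∀ s, x s ⬝ᵥ S *ᵥ x s = ∑ i, ∑ j, x s i * (S i j * x s j) := by
      intro s
      simp [dotProduct, Matrix.mulVec, Finset.mul_sum]
    simp only [this]
    apply HasDerivAt.fun_sum
    intro i _
    apply HasDerivAt.fun_sum
    intro j _
    exact (hxi i).mul ((hxi j).const_mul (S i j))
  convert h using 1
  have hsym : v ⬝ᵥ S *ᵥ x t = x t ⬝ᵥ S *ᵥ v := by
    rw [Matrix.dotProduct_mulVec, dotProduct_comm]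
    nth_rewrite 2 [← hS]
    rw [Matrix.mulVec_transpose]
  have e1 : v ⬝ᵥ S *ᵥ x t = ∑ i, ∑ j, v i * (S i j * x t j) := by
    simp [dotProduct, Matrix.mulVec, Finset.mul_sum]
  have e2 : x t ⬝ᵥ S *ᵥ v = ∑ i, ∑ j, x t i * (S i j * v j) := by
    simp [dotProduct, Matrix.mulVec, Finset.mul_sum]
  rw [two_mul]
  nth_rewrite 2 [hsym]
  rw [e1, e2, ← Finset.sum_add_distrib]
  congr 1; ext i; rw [← Finset.sum_add_distrib]

lemma cs_ineq {N : ℕ} {B : Matrix (Fin N) (Fin N) ℝ} (hB : B.PosDef)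
    (v w : Fin N → ℝ) : (v ⬝ᵥ w)^2 ≤ (v ⬝ᵥ B *ᵥ v) * (w ⬝ᵥ B⁻¹ *ᵥ w) := by
  have hBs : Bᵀ = B := by simpa [Matrix.IsHermitian] using hB.1
  have hBinv : (B⁻¹).PosDef := hB.inv
  have hmul : B * B⁻¹ = 1 := Matrix.mul_nonsing_inv B (isUnit_iff_ne_zero.mpr hB.det_pos.ne')
  set s := w ⬝ᵥ B⁻¹ *ᵥ w with hs
  rcases eq_or_ne w 0 with hw | hw
  · simp [hw, hs]
  have hspos : 0 < s := posdef_dot hBinv hw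
  set μ := (v ⬝ᵥ w) / s with hμ
  set z := v - μ • (B⁻¹ *ᵥ w) with hz
  have key : 0 ≤ z ⬝ᵥ B *ᵥ z := posdef_dot_nonneg hB z
  have hexp : z ⬝ᵥ B *ᵥ z = v ⬝ᵥ B *ᵥ v - 2 * μ * (v ⬝ᵥ w) + μ^2 * s := by
    have hBBinv : B *ᵥ (B⁻¹ *ᵥ w) = w := by rw [Matrix.mulVec_mulVec, hmul, Matrix.one_mulVec]
    have h1 : (B⁻¹ *ᵥ w) ⬝ᵥ B *ᵥ v = v ⬝ᵥ w := by
      rw [dot_symm hBs, hBBinv]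
    have h2 : (B⁻¹ *ᵥ w) ⬝ᵥ w = s := by
      rw [dotProduct_comm, hs]
    rw [hz, Matrix.mulVec_sub, Matrix.mulVec_smul, hBBinv,
      sub_dotProduct, smul_dotProduct,
      dotProduct_sub, dotProduct_sub, dotProduct_smul,
      dotProduct_smul, h1, h2]
    simp only [smul_eq_mul]
    ring
  rw [hexp] at key
  have hμs : μ * s = v ⬝ᵥ w := by rw [hμ, div_mul_cancel₀ _ hspos.ne']
  nlinarith [mul_nonneg key hspos.le, hμs, hspos]

lemma mulVec_sum' {N K : ℕ} (A : Matrix (Fin N) (Fin N) ℝ) (v : Fin K → Fin N → ℝ) :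
    A *ᵥ (∑ i, v i) = ∑ i, A *ᵥ v i := by
  ext j
  simp [Matrix.mulVec, dotProduct, Finset.sum_apply, Finset.mul_sum]
  exact Finset.sum_comm

lemma dotProduct_sum' {N K : ℕ} (y : Fin N → ℝ) (v : Fin K → Fin N → ℝ) :
    y ⬝ᵥ (∑ i, v i) = ∑ i, y ⬝ᵥ v i := by
  simp [dotProduct, Finset.sum_apply, Finset.mul_sum]
  exact Finset.sum_comm

lemma complete_expand {N : ℕ} (M : Matrix (Fin N) (Fin N) ℝ)
    (u : Fin N → Fin N → ℝ)
    (horth : ∀ i j, u i ⬝ᵥ M *ᵥ u j = if i = j then 1 else 0) :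
    ∀ y : Fin N → ℝ, ∑ i, (u i ⬝ᵥ M *ᵥ y) • u i = y := by
  set U : Matrix (Fin N) (Fin N) ℝ := Matrix.of u with hU
  have hUMU : U * M * Uᵀ = 1 := by
    ext i j
    have : (U * M * Uᵀ) i j = u i ⬝ᵥ M *ᵥ u j := by
      simp only [Matrix.mul_apply, dotProduct, Matrix.mulVec, hU, Matrix.of_apply,
        Matrix.transpose_apply, Finset.sum_mul, Finset.mul_sum, mul_assoc]
      rw [Finset.sum_comm]
    rw [this, horth]
    simp [Matrix.one_apply]
  have h2 : (M * Uᵀ) * U = 1 := by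
    rw [mul_eq_one_comm, ← Matrix.mul_assoc]
    exact hUMU
  have h3 : M * (Uᵀ * U) = 1 := by rw [← Matrix.mul_assoc]; exact h2
  have h4 : (Uᵀ * U) * M = 1 := mul_eq_one_comm.mp h3
  intro y
  have h5 : (Uᵀ * U * M) *ᵥ y = y := by rw [h4, Matrix.one_mulVec]
  conv_rhs => rw [← h5]
  ext j
  rw [← Matrix.mulVec_mulVec, ← Matrix.mulVec_mulVec]
  simp only [Finset.sum_apply, Pi.smul_apply, smul_eq_mul]
  have hc : ∀ i, (U *ᵥ (M *ᵥ y)) i = u i ⬝ᵥ M *ᵥ y := by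
    intro i; simp [hU, Matrix.mulVec, dotProduct]
  have hUt : ∀ (c : Fin N → ℝ), (Uᵀ *ᵥ c) j = ∑ i, c i * u i j := by
    intro c; simp [hU, Matrix.mulVec, dotProduct, Matrix.transpose_apply, mul_comm]
  rw [hUt]
  exact Finset.sum_congr rfl (fun i _ => by rw [hc])

lemma evalM' {N : ℕ} {M : Matrix (Fin N) (Fin N) ℝ} (hMs : Mᵀ = M)
    (u : Fin N → Fin N → ℝ) (d : Fin N → ℝ) (y : Fin N → ℝ) :
    y ⬝ᵥ M *ᵥ (∑ i, d i • u i) = ∑ i, d i * (u i ⬝ᵥ M *ᵥ y) := by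
  rw [mulVec_sum', dotProduct_sum']
  exact Finset.sum_congr rfl fun i _ => by
    rw [Matrix.mulVec_smul, dotProduct_smul, smul_eq_mul, dot_symm hMs]

lemma evalA' {N : ℕ} {M A : Matrix (Fin N) (Fin N) ℝ} (hMs : Mᵀ = M)
    (u : Fin N → Fin N → ℝ) (lam : Fin N → ℝ)
    (heig : ∀ i, A *ᵥ u i = lam i • (M *ᵥ u i))
    (d : Fin N → ℝ) (y : Fin N → ℝ) :
    y ⬝ᵥ A *ᵥ (∑ i, d i • u i) = ∑ i, lam i * d i * (u i ⬝ᵥ M *ᵥ y) := by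
  rw [mulVec_sum', dotProduct_sum']
  refine Finset.sum_congr rfl fun i _ => ?_
  rw [Matrix.mulVec_smul, heig i, dotProduct_smul, dotProduct_smul,
    smul_eq_mul, smul_eq_mul, dot_symm hMs]
  ring

lemma scalar_final (L0 L1 r c0sq Q : ℝ) (h0 : 0 < L0) (h01 : L0 < L1) (hrL0 : L0 ≤ r)
    (hrL1 : r < L1) (hc0 : 0 ≤ c0sq) (hQ : 0 ≤ Q) (hQb : Q * (L1 - r) ≤ (r - L0) * c0sq) :
    L0 * (L1 - r) / (r * L1) * ((r - L0) * (c0sq + Q)) ≤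
      c0sq * (r - L0)^2 / L0 + (L1 - r)/L1 * ((r - L0) * c0sq) := by
  have hr0 : 0 < r := lt_of_lt_of_le h0 hrL0
  have hL1 : 0 < L1 := lt_trans h0 h01
  have hrL0' : (0:ℝ) ≤ r - L0 := by linarith
  have hL1r : (0:ℝ) ≤ L1 - r := by linarith
  have lhs_eq : L0 * (L1 - r)/(r*L1) * ((r-L0)*(c0sq+Q))
      = (L0*(L1-r)*((r-L0)*(c0sq+Q)))/(r*L1) := by ring
  have rhs_eq : c0sq*(r-L0)^2/L0 + (L1-r)/L1*((r-L0)*c0sq)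
      = (c0sq*(r-L0)^2*L1 + (L1-r)*((r-L0)*c0sq)*L0)/(L0*L1) := by
    field_simp
  rw [lhs_eq, rhs_eq, div_le_div_iff₀ (by positivity) (by positivity)]
  have h1 : L0^2*(L1-r)*(r-L0)*Q ≤ L0^2*(r-L0)^2*c0sq := by
    nlinarith [mul_le_mul_of_nonneg_left hQb
      (mul_nonneg (by positivity : (0:ℝ) ≤ L0^2) hrL0')]
  have h2 : L0^2*(r-L0)^2*c0sq ≤ r*L1*((r-L0)^2*c0sq) := by
    nlinarith [mul_le_mul_of_nonneg_left (mul_le_mul hrL0 h01.le h0.le hr0.le)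
      (by positivity : (0:ℝ) ≤ (r-L0)^2*c0sq)]
  have h3 : L0^2*(L1-r)*(r-L0)*c0sq ≤ r*L0*((L1-r)*(r-L0)*c0sq) := by
    nlinarith [mul_le_mul_of_nonneg_left hrL0
      (mul_nonneg (mul_nonneg h0.le (mul_nonneg hL1r hrL0')) hc0)]
  nlinarith [mul_le_mul_of_nonneg_left (add_le_add (add_le_add h1 h2) h3) hL1.le]

lemma key_sum {N : ℕ} (lam : Fin (N+2) → ℝ) (c : Fin (N+2) → ℝ)
    (hpos : 0 < lam 0) (hgap : lam 0 < lam 1) (hmono : Monotone lam)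
    (q r : ℝ) (hq : ∑ i, (c i)^2 = q) (hq0 : 0 < q)
    (ha : ∑ i, lam i * (c i)^2 = r * q) (hr2 : r < lam 1) :
    lam 0 * (lam 1 - r) / (r * lam 1) * ((r - lam 0) * q) ≤
      ∑ i, (c i)^2 * (lam i - r)^2 / lam i := by
  set L0 := lam 0 with hL0
  set L1 := lam 1 with hL1
  have hlam : ∀ i, 0 < lam i := fun i => lt_of_lt_of_le hpos (hmono (Fin.zero_le i))
  have hsucc : ∀ i : Fin (N+1), L1 ≤ lam i.succ := by
    intro i
    apply hmono
    rw [Fin.le_def]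
    simp [Fin.val_one]
  set Q := ∑ i : Fin (N+1), (c i.succ)^2 with hQdef
  have hQnn : 0 ≤ Q := Finset.sum_nonneg (fun i _ => sq_nonneg _)
  have hq' : q = (c 0)^2 + Q := by rw [← hq, Fin.sum_univ_succ]
  have ha' : r * q = L0 * (c 0)^2 + ∑ i : Fin (N+1), lam i.succ * (c i.succ)^2 := by
    rw [← ha, Fin.sum_univ_succ]
  have hrL0 : L0 ≤ r := by
    have h : 0 ≤ ∑ i, (lam i - L0) * (c i)^2 :=
      Finset.sum_nonneg (fun i _ => mul_nonneg (by linarith [hmono (Fin.zero_le i)]) (sq_nonneg _))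
    have h2 : ∑ i, (lam i - L0) * (c i)^2 = r * q - L0 * q := by
      rw [← ha, ← hq, Finset.mul_sum, ← Finset.sum_sub_distrib]
      exact Finset.sum_congr rfl (fun i _ => by ring)
    nlinarith
  have hr0 : 0 < r := lt_of_lt_of_le hpos hrL0
  have hQb : Q * (L1 - r) ≤ (r - L0) * (c 0)^2 := by
    have h : (L1 - L0) * Q ≤ ∑ i : Fin (N+1), (lam i.succ - L0) * (c i.succ)^2 := by
      rw [Finset.mul_sum]
      apply Finset.sum_le_sum
      intro i _
      exact mul_le_mul_of_nonneg_right (by linarith [hsucc i]) (sq_nonneg _)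
    have h2 : ∑ i : Fin (N+1), (lam i.succ - L0) * (c i.succ)^2 = r * q - L0 * q := by
      have : ∑ i : Fin (N+1), (lam i.succ - L0) * (c i.succ)^2
          = (∑ i : Fin (N+1), lam i.succ * (c i.succ)^2) - L0 * Q := by
        rw [hQdef, Finset.mul_sum, ← Finset.sum_sub_distrib]
        exact Finset.sum_congr rfl (fun i _ => by ring)
      rw [this]
      rw [hq'] at ha' ⊢
      linarith [ha']
    nlinarith [h, h2, hq']
  have hT : (c 0)^2 * (r - L0)^2 / L0 + (L1 - r)/L1 * ((r - L0) * (c 0)^2)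
      ≤ ∑ i, (c i)^2 * (lam i - r)^2 / lam i := by
    rw [Fin.sum_univ_succ]
    have hP : ∑ i : Fin (N+1), (c i.succ)^2 * (lam i.succ - r) = (r - L0) * (c 0)^2 := by
      have : ∑ i : Fin (N+1), (c i.succ)^2 * (lam i.succ - r)
          = (∑ i : Fin (N+1), lam i.succ * (c i.succ)^2) - r * Q := by
        rw [hQdef, Finset.mul_sum, ← Finset.sum_sub_distrib]
        exact Finset.sum_congr rfl (fun i _ => by ring)
      rw [this]
      rw [hq'] at ha'
      linarith [ha']
    have hterm : ∀ i : Fin (N+1),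
        (L1 - r)/L1 * ((c i.succ)^2 * (lam i.succ - r))
          ≤ (c i.succ)^2 * (lam i.succ - r)^2 / lam i.succ := by
      intro i
      have hl : 0 < lam i.succ := hlam i.succ
      have hL1r : L1 ≤ lam i.succ := hsucc i
      have hL1pos : 0 < L1 := lt_trans hpos hgap
      rw [le_div_iff₀ hl, div_mul_eq_mul_div, div_mul_eq_mul_div, div_le_iff₀ hL1pos]
      nlinarith [mul_nonneg (sq_nonneg (c i.succ)) (mul_nonneg (mul_nonneg hr0.le
        (by linarith : (0:ℝ) ≤ lam i.succ - L1)) (by linarith : (0:ℝ) ≤ lam i.succ - r))]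
    have hsum : (L1 - r)/L1 * ((r - L0) * (c 0)^2)
        ≤ ∑ i : Fin (N+1), (c i.succ)^2 * (lam i.succ - r)^2 / lam i.succ := by
      calc (L1 - r)/L1 * ((r - L0) * (c 0)^2)
          = ∑ i : Fin (N+1), (L1 - r)/L1 * ((c i.succ)^2 * (lam i.succ - r)) := by
            rw [← Finset.mul_sum, hP]
        _ ≤ _ := Finset.sum_le_sum (fun i _ => hterm i)
    have h0 : (c 0)^2 * (r - L0)^2 / L0 = (c 0)^2 * (lam 0 - r)^2 / lam 0 := by
      rw [← hL0, show (r - L0)^2 = (L0 - r)^2 from by ring]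
    linarith [hsum, h0.le]
  calc L0 * (L1 - r) / (r * L1) * ((r - L0) * q)
      = L0 * (L1 - r) / (r * L1) * ((r - L0) * ((c 0)^2 + Q)) := by rw [← hq']
    _ ≤ (c 0)^2 * (r - L0)^2 / L0 + (L1 - r)/L1 * ((r - L0) * (c 0)^2) :=
        scalar_final L0 L1 r ((c 0)^2) Q hpos hgap hrL0 hr2 (sq_nonneg _) hQnn hQb
    _ ≤ _ := hT

lemma scalar_C (L0 L1 r r0 q T νmin νmax : ℝ)
    (h0 : 0 < L0) (hL1 : 0 < L1) (hq0 : 0 < q) (hνmin : 0 < νmin) (hνmax : 0 < νmax)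
    (hL0r : L0 ≤ r) (hrr0 : r ≤ r0) (hr01 : r0 < L1) (hqb : r * q ≤ νmax)
    (hT : L0 * (L1 - r) / (r * L1) * ((r - L0) * q) ≤ T) :
    4 * L0 * (L1 - r0) / ((νmax/νmin) * L1) * (r - L0) ≤ 4 * νmin * T / q^2 := by
  have hr : 0 < r := lt_of_lt_of_le h0 hL0r
  have hq2 : (0:ℝ) < q^2 := pow_pos hq0 2
  have step1 : 4*L0*(L1-r0)/((νmax/νmin)*L1)*(r-L0)
      ≤ 4*νmin*(L0*(L1-r)/(r*L1)*((r-L0)*q))/q^2 := by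
    have e1 : 4*L0*(L1-r0)/((νmax/νmin)*L1)*(r-L0)
        = (4*L0*(L1-r0)*νmin*(r-L0))/(νmax*L1) := by
      field_simp
    have e2 : 4*νmin*(L0*(L1-r)/(r*L1)*((r-L0)*q))/q^2
        = (4*νmin*L0*(L1-r)*(r-L0))/(r*L1*q) := by
      field_simp
    rw [e1, e2, div_le_div_iff₀ (mul_pos hνmax hL1) (mul_pos (mul_pos hr hL1) hq0)]
    have hkey : (L1-r0)*(r*q) ≤ (L1-r)*νmax :=
      mul_le_mul (by linarith) hqb (mul_pos hr hq0).le (by linarith)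
    nlinarith [mul_le_mul_of_nonneg_left hkey
      (mul_nonneg (mul_nonneg (mul_nonneg (by norm_num : (0:ℝ) ≤ 4) hνmin.le) h0.le)
        (mul_nonneg hL1.le (by linarith : (0:ℝ) ≤ r - L0)))]
  have step2 : 4*νmin*(L0*(L1-r)/(r*L1)*((r-L0)*q))/q^2 ≤ 4*νmin*T/q^2 := by
    exact div_le_div_of_nonneg_right
      (mul_le_mul_of_nonneg_left hT (by positivity : (0:ℝ) ≤ 4*νmin)) hq2.le
  linarith

end Helpers

/-- Convergence of the preconditioned gradient flow for the Rayleigh quotient. -/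
theorem statement_1 {n : ℕ}
    (A M B : Matrix (Fin (n+2)) (Fin (n+2)) ℝ)
    (hA : A.PosDef) (hM : M.PosDef) (hB : B.PosDef)
    (lam : Fin (n+2) → ℝ) (u : Fin (n+2) → (Fin (n+2) → ℝ))
    (hlam_pos : 0 < lam 0) (hgap : lam 0 < lam 1) (hmono : Monotone lam)
    (heig : ∀ i, A *ᵥ u i = lam i • (M *ᵥ u i))
    (horth : ∀ i j, u i ⬝ᵥ M *ᵥ u j = if i = j then 1 else 0)
    (νmin νmax : ℝ) (hνmin : 0 < νmin) (hνmax : 0 < νmax)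
    (hν : ∀ z, νmin * (z ⬝ᵥ B *ᵥ z) ≤ z ⬝ᵥ A *ᵥ z ∧ z ⬝ᵥ A *ᵥ z ≤ νmax * (z ⬝ᵥ B *ᵥ z))
    (x : ℝ → (Fin (n+2) → ℝ))
    (hxne : ∀ t : ℝ, 0 ≤ t → x t ≠ 0)
    (hflow : ∀ t : ℝ, 0 ≤ t → HasDerivAt x
      (-(B⁻¹ *ᵥ ((2 / (x t ⬝ᵥ M *ᵥ x t)) •
        (A *ᵥ x t - ((x t ⬝ᵥ A *ᵥ x t) / (x t ⬝ᵥ M *ᵥ x t)) • (M *ᵥ x t))))) t)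
    (hinit : x 0 ⬝ᵥ B *ᵥ x 0 = 1)
    (hinit2 : (x 0 ⬝ᵥ A *ᵥ x 0) / (x 0 ⬝ᵥ M *ᵥ x 0) < lam 1) :
    ∀ t : ℝ, 0 ≤ t →
      (x t ⬝ᵥ A *ᵥ x t) / (x t ⬝ᵥ M *ᵥ x t) - lam 0 ≤
        Real.exp (-(4 * lam 0 * (lam 1 - (x 0 ⬝ᵥ A *ᵥ x 0) / (x 0 ⬝ᵥ M *ᵥ x 0)) /
            ((νmax / νmin) * lam 1)) * t) *
          ((x 0 ⬝ᵥ A *ᵥ x 0) / (x 0 ⬝ᵥ M *ᵥ x 0) - lam 0) := by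
  have hMs : Mᵀ = M := by simpa [Matrix.IsHermitian] using hM.1
  have hAs : Aᵀ = A := by simpa [Matrix.IsHermitian] using hA.1
  have hBs : Bᵀ = B := by simpa [Matrix.IsHermitian] using hB.1
  have hL1pos : 0 < lam 1 := lt_trans hlam_pos hgap
  have hBBinv : ∀ z, B *ᵥ (B⁻¹ *ᵥ z) = z := fun z => by
    rw [Matrix.mulVec_mulVec, Matrix.mul_nonsing_inv B (isUnit_iff_ne_zero.mpr hB.det_pos.ne'),
      Matrix.one_mulVec]
  set W : ℝ → (Fin (n+2) → ℝ) := fun s =>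
    (2 / (x s ⬝ᵥ M *ᵥ x s)) •
      (A *ᵥ x s - ((x s ⬝ᵥ A *ᵥ x s) / (x s ⬝ᵥ M *ᵥ x s)) • (M *ᵥ x s)) with hWdef
  have hflow' : ∀ s, 0 ≤ s → HasDerivAt x (-(B⁻¹ *ᵥ W s)) s := hflow
  have hq0 : ∀ s, 0 ≤ s → 0 < x s ⬝ᵥ M *ᵥ x s := fun s hs => posdef_dot hM (hxne s hs)
  have hdotW : ∀ (s : ℝ) (z : Fin (n+2) → ℝ), z ⬝ᵥ W s
      = (2 / (x s ⬝ᵥ M *ᵥ x s)) * ((z ⬝ᵥ A *ᵥ x s)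
        - ((x s ⬝ᵥ A *ᵥ x s) / (x s ⬝ᵥ M *ᵥ x s)) * (z ⬝ᵥ M *ᵥ x s)) := by
    intro s z
    simp only [hWdef, dotProduct_smul, dotProduct_sub, smul_eq_mul]
  have hGnn : ∀ s, 0 ≤ W s ⬝ᵥ B⁻¹ *ᵥ W s := fun s => posdef_dot_nonneg hB.inv (W s)
  -- derivative of the Rayleigh quotient
  have hrd : ∀ s, 0 ≤ s → HasDerivAt (fun σ => (x σ ⬝ᵥ A *ᵥ x σ) / (x σ ⬝ᵥ M *ᵥ x σ))
      (-(W s ⬝ᵥ B⁻¹ *ᵥ W s)) s := by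
    intro s hs
    have hd := (quad_deriv A hAs (hflow' s hs)).div (quad_deriv M hMs (hflow' s hs))
      (hq0 s hs).ne'
    refine hd.congr_deriv ?_
    rw [dotProduct_comm (W s), hdotW s (B⁻¹ *ᵥ W s)]
    rw [neg_dotProduct, neg_dotProduct]
    have hne := (hq0 s hs).ne'
    set e1 := (B⁻¹ *ᵥ W s) ⬝ᵥ A *ᵥ x s with he1
    set e2 := (B⁻¹ *ᵥ W s) ⬝ᵥ M *ᵥ x s with he2
    set qa := x s ⬝ᵥ A *ᵥ x s with hqa
    set qm := x s ⬝ᵥ M *ᵥ x s with hqm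
    field_simp
    ring
  have hcontR : ContinuousOn (fun σ => (x σ ⬝ᵥ A *ᵥ x σ) / (x σ ⬝ᵥ M *ᵥ x σ)) (Set.Ici (0:ℝ)) :=
    fun s hs => (hrd s hs).continuousAt.continuousWithinAt
  have hAnti : AntitoneOn (fun σ => (x σ ⬝ᵥ A *ᵥ x σ) / (x σ ⬝ᵥ M *ᵥ x σ)) (Set.Ici (0:ℝ)) := by
    apply antitoneOn_of_deriv_nonpos (convex_Ici 0) hcontR
    · intro s hs
      rw [interior_Ici] at hs
      exact (hrd s (le_of_lt hs)).differentiableAt.differentiableWithinAt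
    · intro s hs
      rw [interior_Ici] at hs
      rw [(hrd s (le_of_lt hs)).deriv]
      simpa using hGnn s
  -- x · B x = 1 along the flow
  have hxW0 : ∀ s, 0 ≤ s → x s ⬝ᵥ W s = 0 := by
    intro s hs
    rw [hdotW s (x s), div_mul_cancel₀ _ (hq0 s hs).ne', sub_self, mul_zero]
  have hbd : ∀ s, 0 ≤ s → HasDerivAt (fun σ => x σ ⬝ᵥ B *ᵥ x σ) 0 s := by
    intro s hs
    have h := quad_deriv B hBs (hflow' s hs)
    convert h using 1
    have h1 : (-(B⁻¹ *ᵥ W s)) ⬝ᵥ B *ᵥ x s = 0 := by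
      rw [neg_dotProduct, dot_symm hBs, hBBinv, hxW0 s hs, neg_zero]
    rw [h1, mul_zero]
  have hbconst : ∀ s, 0 ≤ s → x s ⬝ᵥ B *ᵥ x s = 1 := by
    have hcb : ContinuousOn (fun σ => x σ ⬝ᵥ B *ᵥ x σ) (Set.Ici (0:ℝ)) :=
      fun s hs => (hbd s hs).continuousAt.continuousWithinAt
    have hdb : DifferentiableOn ℝ (fun σ => x σ ⬝ᵥ B *ᵥ x σ) (interior (Set.Ici (0:ℝ))) := by
      intro s hs
      rw [interior_Ici] at hs
      exact (hbd s (le_of_lt hs)).differentiableAt.differentiableWithinAt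
    have hd0 : ∀ s ∈ interior (Set.Ici (0:ℝ)), deriv (fun σ => x σ ⬝ᵥ B *ᵥ x σ) s = 0 := by
      intro s hs
      rw [interior_Ici] at hs
      exact (hbd s (le_of_lt hs)).deriv
    have hmono1 : MonotoneOn (fun σ => x σ ⬝ᵥ B *ᵥ x σ) (Set.Ici (0:ℝ)) :=
      monotoneOn_of_deriv_nonneg (convex_Ici 0) hcb hdb (fun s hs => (hd0 s hs).ge)
    have hanti1 : AntitoneOn (fun σ => x σ ⬝ᵥ B *ᵥ x σ) (Set.Ici (0:ℝ)) :=
      antitoneOn_of_deriv_nonpos (convex_Ici 0) hcb hdb (fun s hs => (hd0 s hs).le)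
    intro s hs
    have h1 := hmono1 Set.self_mem_Ici (show s ∈ Set.Ici (0:ℝ) from hs) hs
    have h2 := hanti1 Set.self_mem_Ici (show s ∈ Set.Ici (0:ℝ) from hs) hs
    have : x s ⬝ᵥ B *ᵥ x s = x 0 ⬝ᵥ B *ᵥ x 0 := le_antisymm h2 h1
    rw [this, hinit]
  -- coordinates
  have hexpand := complete_expand M u horth
  have hcoord : ∀ (d : Fin (n+2) → ℝ) (i), u i ⬝ᵥ M *ᵥ (∑ j, d j • u j) = d i := by
    intro d i
    rw [evalM' hMs]
    simp [horth]
  have hq_c : ∀ s, x s ⬝ᵥ M *ᵥ x s = ∑ i, (u i ⬝ᵥ M *ᵥ x s)^2 := by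
    intro s
    conv_lhs => rw [← hexpand (x s)]
    rw [evalM' hMs]
    simp only [hcoord]
    exact Finset.sum_congr rfl fun i _ => (pow_two _).symm
  have ha_c : ∀ s, x s ⬝ᵥ A *ᵥ x s = ∑ i, lam i * (u i ⬝ᵥ M *ᵥ x s)^2 := by
    intro s
    conv_lhs => rw [← hexpand (x s)]
    rw [evalA' hMs u lam heig]
    simp only [hcoord]
    exact Finset.sum_congr rfl fun i _ => by ring
  have hrge : ∀ s, 0 ≤ s → lam 0 ≤ (x s ⬝ᵥ A *ᵥ x s) / (x s ⬝ᵥ M *ᵥ x s) := by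
    intro s hs
    rw [le_div_iff₀ (hq0 s hs), hq_c s, ha_c s, Finset.mul_sum]
    apply Finset.sum_le_sum
    intro i _
    exact mul_le_mul_of_nonneg_right (hmono (Fin.zero_le i)) (sq_nonneg _)
  set R0 : ℝ := (x 0 ⬝ᵥ A *ᵥ x 0) / (x 0 ⬝ᵥ M *ᵥ x 0) with hR0
  set C0 : ℝ := 4 * lam 0 * (lam 1 - R0) / ((νmax / νmin) * lam 1) with hC0
  -- the central differential inequality
  have hkey : ∀ s, 0 ≤ s →
      C0 * ((x s ⬝ᵥ A *ᵥ x s) / (x s ⬝ᵥ M *ᵥ x s) - lam 0) ≤ W s ⬝ᵥ B⁻¹ *ᵥ W s := by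
    intro s hs
    have hqs := hq0 s hs
    have hrs_le : (x s ⬝ᵥ A *ᵥ x s) / (x s ⬝ᵥ M *ᵥ x s) ≤ R0 :=
      hAnti Set.self_mem_Ici (show s ∈ Set.Ici (0:ℝ) from hs) hs
    have hrlt : (x s ⬝ᵥ A *ᵥ x s) / (x s ⬝ᵥ M *ᵥ x s) < lam 1 := lt_of_le_of_lt hrs_le hinit2
    have hLr : lam 0 ≤ (x s ⬝ᵥ A *ᵥ x s) / (x s ⬝ᵥ M *ᵥ x s) := hrge s hs
    set rr : ℝ := (x s ⬝ᵥ A *ᵥ x s) / (x s ⬝ᵥ M *ᵥ x s) with hrr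
    rcases eq_or_lt_of_le hLr with heq | hlt
    · rw [← heq, sub_self, mul_zero]
      exact hGnn s
    set cc : Fin (n+2) → ℝ := fun i => u i ⬝ᵥ M *ᵥ x s with hccdef
    set T := ∑ i, (cc i)^2 * (lam i - rr)^2 / lam i with hT
    have hasum : ∑ i, lam i * (cc i)^2 = rr * (x s ⬝ᵥ M *ᵥ x s) := by
      rw [hrr, div_mul_cancel₀ _ hqs.ne']
      exact (ha_c s).symm
    have hksum := key_sum lam cc hlam_pos hgap hmono (x s ⬝ᵥ M *ᵥ x s) rr
      (hq_c s).symm hqs hasum hrlt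
    have hTpos : 0 < T := by
      refine lt_of_lt_of_le ?_ hksum
      apply mul_pos (div_pos (mul_pos hlam_pos (by linarith)) (mul_pos (by linarith) hL1pos))
        (mul_pos (by linarith) hqs)
    set dd : Fin (n+2) → ℝ := fun i => cc i * (lam i - rr) / lam i with hdd
    set v : Fin (n+2) → ℝ := ∑ i, dd i • u i with hv
    have hlamall : ∀ i, 0 < lam i := fun i => lt_of_lt_of_le hlam_pos (hmono (Fin.zero_le i))
    have hvA : v ⬝ᵥ A *ᵥ v = T := by
      rw [hv, evalA' hMs u lam heig]
      simp only [hcoord]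
      rw [hT]
      refine Finset.sum_congr rfl fun i _ => ?_
      simp only [hdd]
      have := (hlamall i).ne'
      field_simp
    have hvw : v ⬝ᵥ W s = (2 / (x s ⬝ᵥ M *ᵥ x s)) * T := by
      rw [hdotW s v]
      have h1 : v ⬝ᵥ A *ᵥ x s = ∑ i, lam i * dd i * cc i := by
        rw [dot_symm hAs, hv, evalA' hMs u lam heig]
      have h2 : v ⬝ᵥ M *ᵥ x s = ∑ i, dd i * cc i := by
        rw [dot_symm hMs, hv, evalM' hMs]
      rw [h1, h2, ← hrr]
      congr 1
      rw [Finset.mul_sum, ← Finset.sum_sub_distrib, hT]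
      refine Finset.sum_congr rfl fun i _ => ?_
      simp only [hdd]
      have := (hlamall i).ne'
      field_simp
    have hvB1 : νmin * (v ⬝ᵥ B *ᵥ v) ≤ T := by rw [← hvA]; exact (hν v).1
    have hvB2 : T ≤ νmax * (v ⬝ᵥ B *ᵥ v) := by rw [← hvA]; exact (hν v).2
    have hvBpos : 0 < v ⬝ᵥ B *ᵥ v := by nlinarith
    have hCS := cs_ineq hB v (W s)
    rw [hvw] at hCS
    have hGlb : 4 * νmin * T / (x s ⬝ᵥ M *ᵥ x s)^2 ≤ W s ⬝ᵥ B⁻¹ *ᵥ W s := by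
      have hfrac : (0:ℝ) ≤ 4 * T / (x s ⬝ᵥ M *ᵥ x s)^2 :=
        le_of_lt (div_pos (by linarith) (pow_pos hqs 2))
      have h1 : 4 * νmin * T / (x s ⬝ᵥ M *ᵥ x s)^2 * (v ⬝ᵥ B *ᵥ v)
          ≤ (2 / (x s ⬝ᵥ M *ᵥ x s) * T)^2 := by
        have e : (2 / (x s ⬝ᵥ M *ᵥ x s) * T)^2 = (4 * T / (x s ⬝ᵥ M *ᵥ x s)^2) * T := by
          field_simp
          ring
        have e2 : 4 * νmin * T / (x s ⬝ᵥ M *ᵥ x s)^2 * (v ⬝ᵥ B *ᵥ v)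
            = (4 * T / (x s ⬝ᵥ M *ᵥ x s)^2) * (νmin * (v ⬝ᵥ B *ᵥ v)) := by ring
        rw [e, e2]
        exact mul_le_mul_of_nonneg_left hvB1 hfrac
      have h2 : 4 * νmin * T / (x s ⬝ᵥ M *ᵥ x s)^2 * (v ⬝ᵥ B *ᵥ v)
          ≤ (W s ⬝ᵥ B⁻¹ *ᵥ W s) * (v ⬝ᵥ B *ᵥ v) := by
        calc 4 * νmin * T / (x s ⬝ᵥ M *ᵥ x s)^2 * (v ⬝ᵥ B *ᵥ v)
            ≤ (2 / (x s ⬝ᵥ M *ᵥ x s) * T)^2 := h1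
          _ ≤ (v ⬝ᵥ B *ᵥ v) * (W s ⬝ᵥ B⁻¹ *ᵥ W s) := hCS
          _ = (W s ⬝ᵥ B⁻¹ *ᵥ W s) * (v ⬝ᵥ B *ᵥ v) := mul_comm _ _
      exact le_of_mul_le_mul_right h2 hvBpos
    have hqb : rr * (x s ⬝ᵥ M *ᵥ x s) ≤ νmax := by
      have he : rr * (x s ⬝ᵥ M *ᵥ x s) = x s ⬝ᵥ A *ᵥ x s := by
        rw [hrr]
        exact div_mul_cancel₀ _ hqs.ne'
      rw [he]
      have h2 := (hν (x s)).2
      rw [hbconst s hs] at h2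
      linarith
    have hfin := scalar_C (lam 0) (lam 1) rr R0 (x s ⬝ᵥ M *ᵥ x s) T νmin νmax
      hlam_pos hL1pos hqs hνmin hνmax hLr hrs_le hinit2 hqb hksum
    calc C0 * (rr - lam 0)
        = 4 * lam 0 * (lam 1 - R0) / ((νmax / νmin) * lam 1) * (rr - lam 0) := by rw [hC0]
      _ ≤ 4 * νmin * T / (x s ⬝ᵥ M *ᵥ x s)^2 := hfin
      _ ≤ W s ⬝ᵥ B⁻¹ *ᵥ W s := hGlb
  -- Gronwall argument
  intro t ht
  set E : ℝ → ℝ := fun σ =>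
    ((x σ ⬝ᵥ A *ᵥ x σ) / (x σ ⬝ᵥ M *ᵥ x σ) - lam 0) * Real.exp (C0 * σ) with hE
  have hEd : ∀ s, 0 ≤ s → HasDerivAt E
      ((-(W s ⬝ᵥ B⁻¹ *ᵥ W s)) * Real.exp (C0 * s)
        + ((x s ⬝ᵥ A *ᵥ x s) / (x s ⬝ᵥ M *ᵥ x s) - lam 0) * (Real.exp (C0 * s) * C0)) s := by
    intro s hs
    have h1 := (hrd s hs).sub_const (lam 0)
    have h2 : HasDerivAt (fun σ => Real.exp (C0 * σ)) (Real.exp (C0 * s) * C0) s := by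
      have := ((hasDerivAt_id s).const_mul C0).exp
      simpa using this
    exact h1.mul h2
  have hEanti : AntitoneOn E (Set.Ici (0:ℝ)) := by
    apply antitoneOn_of_deriv_nonpos (convex_Ici 0)
    · exact fun s hs => (hEd s hs).continuousAt.continuousWithinAt
    · intro s hs
      rw [interior_Ici] at hs
      exact (hEd s (le_of_lt hs)).differentiableAt.differentiableWithinAt
    · intro s hs
      rw [interior_Ici] at hs
      rw [(hEd s (le_of_lt hs)).deriv]
      have hk := hkey s (le_of_lt hs)
      have he := Real.exp_pos (C0 * s)
      nlinarith [mul_le_mul_of_nonneg_right hk he.le]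
  have hE0 : E 0 = R0 - lam 0 := by
    rw [hE]
    simp only [mul_zero, Real.exp_zero, mul_one]
    rfl
  have hEt : E t ≤ E 0 := hEanti Set.self_mem_Ici (show t ∈ Set.Ici (0:ℝ) from ht) ht
  rw [hE0] at hEt
  have hEpos : (0:ℝ) < Real.exp (C0 * t) := Real.exp_pos _
  have hexp : Real.exp (-C0 * t) = (Real.exp (C0 * t))⁻¹ := by
    rw [neg_mul, Real.exp_neg]
  rw [hexp, inv_mul_eq_div, le_div_iff₀ hEpos]
  have : E t = ((x t ⬝ᵥ A *ᵥ x t) / (x t ⬝ᵥ M *ᵥ x t) - lam 0) * Real.exp (C0 * t) := by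
    rw [hE]
  rw [← this]
  exact hEt
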